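/- Translate annotated first-order terms to closed trees by tree(x) := a leaf node with constructor x and no children, and tree(f(t̄₁,…,t̄ₙ)^l) := a node with constructor (f,l) and children tree(t̄₁),…,tree(t̄ₙ); measure node constructors by m(x) := ⊥ for a formal bottom element and m((f,l)) := l, where traces are strictly ordered by reverse strict inclusion of their underlying sets (l < l' iff l ⊋ l' as sets), an order that is well-founded since F is finite. Then for every annotated reduction step t̄ → t̄' (in any definition environment D), the pair of trees tree(t̄) → tree(t̄') is a measured tree expansion with respect to m. -/
import Mathlib


/-- First-order terms over function names `F` and variables `X`. -/
inductive Tm (F : Type) (X : Type) : Type where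
  | var : X → Tm F X
  | app : F → List (Tm F X) → Tm F X

/-- Annotated first-order terms: each application node carries a trace (list of
function names). -/
inductive ATm (F : Type) (X : Type) : Type where
  | var : X → ATm F X
  | app : F → List (ATm F X) → List F → ATm F X

/-- A definition environment: each function name has an arity and a body whose
free variables are among `x₁, …, xₙ` (modelled as `Fin (arity f)`). -/
structure Env (F : Type) where
  arity : F → ℕ
  body : (f : F) → Tm F (Fin (arity f))

/-- The annotating substitution `t[σ]^l`. -/
def annSub {F X V : Type} (σ : V → ATm F X) (l : List F) : Tm F V → ATm F X
  | .var v => σ v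
  | .app f ts => .app f (ts.attach.map fun t => annSub σ l t.1) l
decreasing_by all_goals (simp_wf; have := List.sizeOf_lt_of_mem t.2; simp_all; omega)

/-- Ordinary (capture-free) substitution on unannotated terms. -/
def subst {F X V : Type} (σ : V → Tm F X) : Tm F V → Tm F X
  | .var v => σ v
  | .app f ts => .app f (ts.attach.map fun t => subst σ t.1)
decreasing_by all_goals (simp_wf; have := List.sizeOf_lt_of_mem t.2; simp_all; omega)

/-- Erasure: delete all traces. -/
def erase {F X : Type} : ATm F X → Tm F X
  | .var x => .var x
  | .app f ts _ => .app f (ts.attach.map fun t => erase t.1)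
decreasing_by all_goals (simp_wf; have := List.sizeOf_lt_of_mem t.2; simp_all; omega)

/-- One step of annotated reduction with respect to `D`. -/
inductive ARed {F X : Type} (D : Env F) : ATm F X → ATm F X → Prop where
  | head : ∀ (f : F) (l : List F) (args : List (ATm F X))
      (h : args.length = D.arity f), f ∉ l →
      ARed D (.app f args l)
        (annSub (fun i => args.get (Fin.cast h.symm i)) (l ++ [f]) (D.body f))
  | congr : ∀ (f : F) (l : List F) (pre post : List (ATm F X)) (t t' : ATm F X),
      ARed D t t' →
      ARed D (.app f (pre ++ t :: post) l) (.app f (pre ++ t' :: post) l)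

/-- One step of β-reduction on unannotated terms with respect to `D`. -/
inductive Beta {F X : Type} (D : Env F) : Tm F X → Tm F X → Prop where
  | head : ∀ (f : F) (args : List (Tm F X)) (h : args.length = D.arity f),
      Beta D (.app f args)
        (subst (fun i => args.get (Fin.cast h.symm i)) (D.body f))
  | congr : ∀ (f : F) (pre post : List (Tm F X)) (t t' : Tm F X),
      Beta D t t' →
      Beta D (.app f (pre ++ t :: post)) (.app f (pre ++ t' :: post))

/-- Subterm relation on annotated terms. -/
inductive ASubtm {F X : Type} : ATm F X → ATm F X → Prop where
  | refl : ∀ t, ASubtm t t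
  | arg : ∀ (s u : ATm F X) (f : F) (args : List (ATm F X)) (l : List F),
      u ∈ args → ASubtm s u → ASubtm s (.app f args l)

/-- Subterm relation on unannotated terms. -/
inductive Subtm {F X : Type} : Tm F X → Tm F X → Prop where
  | refl : ∀ t, Subtm t t
  | arg : ∀ (s u : Tm F X) (f : F) (args : List (Tm F X)),
      u ∈ args → Subtm s u → Subtm s (.app f args)

/-- `t[∅]^∅`: annotate an unannotated term with empty traces everywhere. -/
def annInit {F X : Type} (t : Tm F X) : ATm F X := annSub (fun x => .var x) [] t

/-- A term is reachable if it occurs as a subterm of a term in an annotated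
reduction sequence starting from a term annotated with empty traces. -/
def Reachable {F X : Type} (D : Env F) (s : ATm F X) : Prop :=
  ∃ (t : Tm F X) (w : ATm F X),
    Relation.ReflTransGen (ARed D) (annInit t) w ∧ ASubtm s w

/-- `t̄` contains a blocked redex `f(…)^l` with `f ∈ l`. -/
def HasBlockedRedex {F X : Type} (t : ATm F X) : Prop :=
  ∃ (f : F) (args : List (ATm F X)) (l : List F),
    ASubtm (.app f args l) t ∧ f ∈ l

/-- Open finitely-branching trees over node constructors `N` and variables `V`. -/
inductive Tree' (N : Type) (V : Type) : Type where
  | leaf : V → Tree' N V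
  | node : N → List (Tree' N V) → Tree' N V

/-- Closed trees: no variables. -/
abbrev CTree (N : Type) := Tree' N Empty

/-- Root constructor of a closed tree. -/
def CTree.constr {N : Type} : CTree N → N
  | .leaf v => v.elim
  | .node c _ => c

/-- Grafting: replace each leaf (which carries a closed tree) by that tree. -/
def graft {N : Type} : Tree' N (CTree N) → CTree N
  | .leaf t => t
  | .node c ts => .node c (ts.attach.map fun t => graft t.1)
decreasing_by all_goals (simp_wf; have := List.sizeOf_lt_of_mem t.2; simp_all; omega)

/-- The list of variables decorating the leaves of a tree. -/
def Tree'.leaves {N V : Type} : Tree' N V → List V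
  | .leaf v => [v]
  | .node _ ts => (ts.attach.map fun t => t.1.leaves).flatten
decreasing_by all_goals (simp_wf; have := List.sizeOf_lt_of_mem t.2; simp_all; omega)

/-- The list of node constructors occurring in a tree. -/
def Tree'.constrs {N V : Type} : Tree' N V → List N
  | .leaf _ => []
  | .node c ts => c :: (ts.attach.map fun t => t.1.constrs).flatten
decreasing_by all_goals (simp_wf; have := List.sizeOf_lt_of_mem t.2; simp_all; omega)

/-- `AtPath a π b` : `b` is the subtree occurrence of `a` addressed by the
path `π` (read from the root: the first index selects a child, etc.). -/
inductive AtPath {N V : Type} : Tree' N V → List ℕ → Tree' N V → Prop where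
  | nil : ∀ a, AtPath a [] a
  | cons : ∀ (c : N) (ts : List (Tree' N V)) (i : ℕ) (a b : Tree' N V) (π : List ℕ),
      ts[i]? = some a → AtPath a π b → AtPath (.node c ts) (i :: π) b

/-- `s` is a strict subtree of `b`: it occurs at some nonempty path. -/
def IsStrictSubtree {N : Type} (s b : CTree N) : Prop :=
  ∃ π : List ℕ, π ≠ [] ∧ AtPath b π s

/-- Measured tree expansion with respect to a measure `m : N → O` and a strict
order `r` on `O`: a head tree expansion, applied at an arbitrary subtree
occurrence, replacing a subtree `b` by `graft bs` where the leaves of `bs` are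
strict subtrees of `b` and all new node constructors of `bs` have measure
strictly `r`-below the measure of the root constructor of `b`. -/
inductive MExp {N O : Type} (m : N → O) (r : O → O → Prop) : CTree N → CTree N → Prop where
  | head : ∀ (b : CTree N) (bs : Tree' N (CTree N)),
      (∀ s ∈ bs.leaves, IsStrictSubtree s b) →
      (∀ c ∈ bs.constrs, r (m c) (m (CTree.constr b))) →
      MExp m r b (graft bs)
  | congr : ∀ (c : N) (pre post : List (CTree N)) (t t' : CTree N),
      MExp m r t t' →
      MExp m r (.node c (pre ++ t :: post)) (.node c (pre ++ t' :: post))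

/-- `m_Path(a)(π)`: the multiset of measures of the constructors lying strictly
above the subtree addressed by `π`, endpoints: root of `a` included, the
addressed subtree excluded. -/
def pathMeasure {N O V : Type} (m : N → O) : Tree' N V → List ℕ → Multiset O
  | _, [] => 0
  | .leaf _, _ :: _ => 0
  | .node c ts, i :: π =>
      match ts[i]? with
      | some a => {m c} + pathMeasure m a π
      | none => 0

/-- `m_Tree(a)`: the multiset, over all subtree occurrences `b` of `a`, of the
node measures `m_Node(a)(b)` (the multiset of measures of the constructors on
the path from the root of `a` down to `b`, both endpoints included). -/
def treeMeasure {N O : Type} (m : N → O) : CTree N → Multiset (Multiset O)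
  | .leaf v => v.elim
  | .node c ts =>
      {({m c} : Multiset O)} +
        ((ts.attach.map fun t =>
            (treeMeasure m t.1).map (fun M => ({m c} : Multiset O) + M)).foldr (· + ·) 0)
decreasing_by all_goals (simp_wf; have := List.sizeOf_lt_of_mem t.2; simp_all; omega)

/-- The (strict) Dershowitz–Manna multiset extension of a relation `r`. -/
def DMLT {α : Type} (r : α → α → Prop) (M N : Multiset α) : Prop :=
  ∃ X Y Z : Multiset α, Z ≠ 0 ∧ M = X + Y ∧ N = X + Z ∧ ∀ y ∈ Y, ∃ z ∈ Z, r y z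

/-- The translation of annotated terms to closed trees: a variable becomes a
childless node with constructor `x`, and `f(t̄₁,…,t̄ₙ)^l` becomes a node with
constructor `(f, l)` and children the translated arguments. -/
def atree {F X : Type} : ATm F X → CTree (X ⊕ F × List F)
  | .var x => .node (.inl x) []
  | .app f args l => .node (.inr (f, l)) (args.attach.map fun t => atree t.1)
decreasing_by all_goals (simp_wf; have := List.sizeOf_lt_of_mem t.2; simp_all; omega)

/-- The measure on node constructors: variables are sent to a formal bottom
element `⊥` (here `none`) and `(f, l)` is sent to the trace `l`. -/
def atreeMeasure {F X : Type} : X ⊕ F × List F → Option (List F)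
  | .inl _ => none
  | .inr (_, l) => some l

/-- The strict order on measures: `⊥` is strictly below every trace, and
`l < l'` iff `l ⊋ l'` as sets (reverse strict inclusion of underlying sets). -/
def traceLT {F : Type} [DecidableEq F] : Option (List F) → Option (List F) → Prop
  | none, some _ => True
  | some l, some l' => l'.toFinset ⊂ l.toFinset
  | _, none => False

/-- Auxiliary: turn an unannotated body into an open tree whose leaves are the
translated substituted arguments. -/
def body2tree {F X V : Type} (σ : V → ATm F X) (l : List F) :
    Tm F V → Tree' (X ⊕ F × List F) (CTree (X ⊕ F × List F))
  | .var v => .leaf (atree (σ v))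
  | .app g ts => .node (.inr (g, l)) (ts.attach.map fun t => body2tree σ l t.1)
decreasing_by all_goals (simp_wf; have := List.sizeOf_lt_of_mem t.2; simp_all; omega)

theorem atree_app {F X : Type} (f : F) (args : List (ATm F X)) (l : List F) :
    atree (.app f args l) = .node (.inr (f, l)) (args.map atree) := by
  rw [atree]; simp

theorem annSub_app {F X V : Type} (σ : V → ATm F X) (l : List F) (g : F) (ts : List (Tm F V)) :
    annSub σ l (.app g ts) = .app g (ts.map (annSub σ l)) l := by
  rw [annSub]; simp

theorem body2tree_app {F X V : Type} (σ : V → ATm F X) (l : List F) (g : F) (ts : List (Tm F V)) :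
    body2tree σ l (.app g ts) = .node (.inr (g, l)) (ts.map (body2tree σ l)) := by
  rw [body2tree]; simp

theorem graft_body2tree {F X V : Type} (σ : V → ATm F X) (l : List F) :
    ∀ t : Tm F V, graft (body2tree σ l t) = atree (annSub σ l t)
  | .var v => by rw [body2tree, annSub, graft]
  | .app g ts => by
      rw [body2tree_app, annSub_app, atree_app, graft]
      simp only [List.map_map, List.attach_map_val]
      congr 1
      exact List.map_congr_left fun t ht => graft_body2tree σ l t
decreasing_by all_goals (simp_wf; have := List.sizeOf_lt_of_mem ht; simp_all; omega)

theorem leaves_body2tree {F X V : Type} (σ : V → ATm F X) (l : List F) :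
    ∀ (t : Tm F V) (s : CTree (X ⊕ F × List F)),
      s ∈ (body2tree σ l t).leaves → ∃ v, s = atree (σ v)
  | .var v, s, hs => by
      rw [body2tree, Tree'.leaves] at hs
      simp at hs; exact ⟨v, hs⟩
  | .app g ts, s, hs => by
      rw [body2tree_app, Tree'.leaves] at hs
      simp only [List.mem_flatten, List.mem_map, List.mem_attach, true_and,
        Subtype.exists] at hs
      obtain ⟨L, ⟨u, ⟨t0, ht0, rfl⟩, rfl⟩, hsL⟩ := hs
      exact leaves_body2tree σ l t0 s hsL
termination_by t _ _ => sizeOf t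
decreasing_by all_goals (simp_wf; have := List.sizeOf_lt_of_mem ht0; simp_all; omega)

theorem constrs_body2tree {F X V : Type} (σ : V → ATm F X) (l : List F) :
    ∀ (t : Tm F V) (c : X ⊕ F × List F),
      c ∈ (body2tree σ l t).constrs → ∃ g : F, c = .inr (g, l)
  | .var v, c, hc => by rw [body2tree, Tree'.constrs] at hc; simp at hc
  | .app g ts, c, hc => by
      rw [body2tree_app, Tree'.constrs] at hc
      simp only [List.mem_cons, List.mem_flatten, List.mem_map, List.mem_attach,
        true_and, Subtype.exists] at hc
      rcases hc with rfl | ⟨L, ⟨u, ⟨t0, ht0, rfl⟩, rfl⟩, hcL⟩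
      · exact ⟨g, rfl⟩
      · exact constrs_body2tree σ l t0 c hcL
termination_by t _ _ => sizeOf t
decreasing_by all_goals (simp_wf; have := List.sizeOf_lt_of_mem ht0; simp_all; omega)

/-- every annotated reduction step, translated to trees, is a
measured tree expansion with respect to the measure above. -/
theorem annotated_step_is_measured_expansion
    {F X : Type} [Fintype F] [DecidableEq F] [Countable X]
    (D : Env F) (t t' : ATm F X) (h : ARed D t t') :
    MExp atreeMeasure (traceLT (F := F)) (atree t) (atree t') := by
  induction h with
  | head f l args harity hfl =>
      rw [atree_app, ← graft_body2tree]
      apply MExp.head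
      · intro s hs
        obtain ⟨v, rfl⟩ := leaves_body2tree _ _ _ s hs
        refine ⟨[(v : ℕ)], by simp, ?_⟩
        apply AtPath.cons _ _ _ _ _ []
        · rw [List.getElem?_map]
          have : args[(v : ℕ)]? = some (args.get (Fin.cast harity.symm v)) := by
            apply List.getElem?_eq_getElem
          rw [this, Option.map_some]
        · exact AtPath.nil _
      · intro c hc
        obtain ⟨g, rfl⟩ := constrs_body2tree _ _ _ c hc
        show traceLT (some (l ++ [f])) (some l)
        show l.toFinset ⊂ (l ++ [f]).toFinset
        rw [List.toFinset_append]
        constructor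
        · exact Finset.subset_union_left
        · intro hsub
          have : f ∈ l.toFinset := hsub (by simp)
          simp at this
          exact hfl this
  | congr f l pre post t t' _ ih =>
      rw [atree_app, atree_app]
      simp only [List.map_append, List.map_cons]
      exact MExp.congr _ _ _ _ _ ih
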